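/- Let V be a complex vector space of dimension d ≥ 6 with a nondegenerate symmetric bilinear form B. For i = 1, 2 let Lᵢ ⊆ V be a one-dimensional subspace and uᵢ a nonzero isotropic vector with uᵢ ∈ Lᵢ^⊥ and uᵢ ∉ Lᵢ, and set Wᵢ = (Lᵢ + ℂuᵢ)^⊥. Assume moreover that the restriction of B to L₁ is nonzero (i.e., L₁ is not isotropic). Suppose 𝔥 ⊆ End(V) is a Lie subalgebra (commutator bracket) containing T_{uᵢ,w} for every w ∈ Wᵢ and both i = 1, 2. Then T_{u₁,u₂} ∈ 𝔥. -/

import Mathlib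

/-- For a symmetric bilinear form `B` on `V` and vectors `a b : V`, the endomorphism
`x ↦ B(x,b)•a − B(x,a)•b`, which corresponds to `a ∧ b ∈ Λ²V ≅ so(V,B)`. -/
noncomputable def Tmap {K V : Type*} [CommRing K] [AddCommGroup V] [Module K V]
    (B : V →ₗ[K] V →ₗ[K] K) (a b : V) : Module.End K V :=
  (LinearMap.toSpanSingleton K V a).comp (B.flip b) -
    (LinearMap.toSpanSingleton K V b).comp (B.flip a)

attribute [local instance 100] LieRing.ofAssociativeRing

section helpers
variable {K V : Type*} [CommRing K] [AddCommGroup V] [Module K V]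
variable (B : V →ₗ[K] V →ₗ[K] K)

lemma Tmap_apply (a b x : V) : Tmap B a b x = B x b • a - B x a • b := by
  simp [Tmap, LinearMap.toSpanSingleton_apply]

lemma Tmap_comm (a b : V) : Tmap B b a = - Tmap B a b := by
  ext x; simp [Tmap_apply]

lemma Tmap_self (a : V) : Tmap B a a = 0 := by
  ext x; simp [Tmap_apply]

lemma lie_Tmap (hsymm : ∀ x y : V, B x y = B y x) (a b c d : V) :
    ⁅Tmap B a b, Tmap B c d⁆ =
      B b c • Tmap B a d - B b d • Tmap B a c - B a c • Tmap B b d + B a d • Tmap B b c := by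
  ext x
  simp only [Ring.lie_def, LinearMap.sub_apply, Module.End.mul_apply, LinearMap.add_apply,
    LinearMap.smul_apply, Tmap_apply, map_sub, map_smul, smul_sub, smul_smul, smul_eq_mul]
  rw [hsymm c b, hsymm d b, hsymm c a, hsymm d a]
  module

end helpers

section orthHelpers
open Module Submodule LinearMap.BilinForm
set_option linter.unusedSectionVars false
variable {V : Type*} [AddCommGroup V] [Module ℂ V] [FiniteDimensional ℂ V]
variable (B : V →ₗ[ℂ] V →ₗ[ℂ] ℂ)

lemma orth_apply {N : Submodule ℂ V} {x : V}
    (hx : x ∈ LinearMap.BilinForm.orthogonal B N) {n : V} (hn : n ∈ N) : B n x = 0 :=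
  hx n hn

lemma mem_orth {N : Submodule ℂ V} {x : V} (h : ∀ n ∈ N, B n x = 0) :
    x ∈ LinearMap.BilinForm.orthogonal B N := h

lemma frk_span_singleton_le (v : V) : finrank ℂ (ℂ ∙ v : Submodule ℂ V) ≤ 1 := by
  by_cases h : v = 0
  · rw [h, Submodule.span_zero_singleton, finrank_bot]; norm_num
  · rw [finrank_span_singleton h]

lemma frk_sup_le (s t : Submodule ℂ V) :
    finrank ℂ (s ⊔ t : Submodule ℂ V) ≤ finrank ℂ s + finrank ℂ t := by
  have := Submodule.finrank_sup_add_finrank_inf_eq s t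
  omega

end orthHelpers

set_option maxHeartbeats 1000000 in
theorem stmt3_aux (V : Type*) [AddCommGroup V] [Module ℂ V] [FiniteDimensional ℂ V]
    (hd : 6 ≤ Module.finrank ℂ V)
    (B : V →ₗ[ℂ] V →ₗ[ℂ] ℂ) (hsymm : ∀ x y : V, B x y = B y x)
    (hnd : ∀ x : V, (∀ y : V, B x y = 0) → x = 0)
    (L₁ L₂ : Submodule ℂ V)
    (hL₁ : Module.finrank ℂ L₁ = 1) (hL₂ : Module.finrank ℂ L₂ = 1)
    (u₁ u₂ : V) (hu₁ : u₁ ≠ 0) (hu₂ : u₂ ≠ 0)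
    (hiso₁ : B u₁ u₁ = 0) (hiso₂ : B u₂ u₂ = 0)
    (hu₁L : ∀ l ∈ L₁, B u₁ l = 0) (hu₂L : ∀ l ∈ L₂, B u₂ l = 0)
    (hu₁nL : u₁ ∉ L₁) (hu₂nL : u₂ ∉ L₂)
    (hL₁ne : ∃ l ∈ L₁, ∃ l' ∈ L₁, B l l' ≠ 0)
    (𝔥 : LieSubalgebra ℂ (Module.End ℂ V))
    (h₁ : ∀ w : V, B w u₁ = 0 → (∀ l ∈ L₁, B w l = 0) → Tmap B u₁ w ∈ 𝔥)
    (h₂ : ∀ w : V, B w u₂ = 0 → (∀ l ∈ L₂, B w l = 0) → Tmap B u₂ w ∈ 𝔥) :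
    Tmap B u₁ u₂ ∈ 𝔥 := by
  classical
  open Module Submodule LinearMap.BilinForm in
  have hrefl : B.IsRefl := fun x y h => by rw [hsymm]; exact h
  have hNon : LinearMap.BilinForm.Nondegenerate B :=
    ⟨hnd, fun y h => hnd y fun x => (hsymm y x).trans (h x)⟩
  set d := Module.finrank ℂ V with hdd
  have dd : ∀ N : Submodule ℂ V,
      LinearMap.BilinForm.orthogonal B (LinearMap.BilinForm.orthogonal B N) = N :=
    fun N => LinearMap.BilinForm.orthogonal_orthogonal hNon hrefl N
  have fr : ∀ N : Submodule ℂ V,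
      Module.finrank ℂ (LinearMap.BilinForm.orthogonal B N) = d - Module.finrank ℂ N :=
    fun N => LinearMap.BilinForm.finrank_orthogonal hNon N
  -- basic membership facts
  have hu₁M₁ : u₁ ∈ L₁ ⊔ (ℂ ∙ u₁) := Submodule.mem_sup_right (Submodule.mem_span_singleton_self u₁)
  have hu₂M₂ : u₂ ∈ L₂ ⊔ (ℂ ∙ u₂) := Submodule.mem_sup_right (Submodule.mem_span_singleton_self u₂)
  have hL₁M₁ : L₁ ≤ L₁ ⊔ (ℂ ∙ u₁) := le_sup_left
  have hL₂M₂ : L₂ ≤ L₂ ⊔ (ℂ ∙ u₂) := le_sup_left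
  have frM₁ : Module.finrank ℂ (L₁ ⊔ (ℂ ∙ u₁) : Submodule ℂ V) ≤ 2 := by
    have := frk_sup_le L₁ (ℂ ∙ u₁)
    have := frk_span_singleton_le u₁
    omega
  have frM₂ : Module.finrank ℂ (L₂ ⊔ (ℂ ∙ u₂) : Submodule ℂ V) ≤ 2 := by
    have := frk_sup_le L₂ (ℂ ∙ u₂)
    have := frk_span_singleton_le u₂
    omega
  by_cases hc : B u₁ u₂ = 0
  · -- CASE A
    by_cases hA : ∀ l ∈ L₁, B u₂ l = 0
    · exact h₁ u₂ ((hsymm u₂ u₁).trans hc) hA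
    · push_neg at hA
      obtain ⟨l, hlL, hlne⟩ := hA
      have frNa : Module.finrank ℂ ((L₁ ⊔ (ℂ ∙ u₁)) ⊔ (ℂ ∙ u₂) : Submodule ℂ V) ≤ 3 := by
        have := frk_sup_le (L₁ ⊔ (ℂ ∙ u₁)) (ℂ ∙ u₂)
        have := frk_span_singleton_le u₂
        omega
      have frNb : Module.finrank ℂ ((L₂ ⊔ (ℂ ∙ u₂)) ⊔ (ℂ ∙ u₁) : Submodule ℂ V) ≤ 3 := by
        have := frk_sup_le (L₂ ⊔ (ℂ ∙ u₂)) (ℂ ∙ u₁)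
        have := frk_span_singleton_le u₁
        omega
      have key : ∃ w₁ ∈ LinearMap.BilinForm.orthogonal B ((L₁ ⊔ (ℂ ∙ u₁)) ⊔ (ℂ ∙ u₂)),
          ∃ w₂ ∈ LinearMap.BilinForm.orthogonal B ((L₂ ⊔ (ℂ ∙ u₂)) ⊔ (ℂ ∙ u₁)), B w₁ w₂ ≠ 0 := by
        by_contra hcon
        push_neg at hcon
        have hle : LinearMap.BilinForm.orthogonal B ((L₁ ⊔ (ℂ ∙ u₁)) ⊔ (ℂ ∙ u₂)) ≤ ((L₂ ⊔ (ℂ ∙ u₂)) ⊔ (ℂ ∙ u₁)) := by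
          rw [← dd ((L₂ ⊔ (ℂ ∙ u₂)) ⊔ (ℂ ∙ u₁))]
          exact fun x hx => mem_orth B fun n hn => hsymm n x ▸ hcon x hx n hn
        have heq : LinearMap.BilinForm.orthogonal B ((L₁ ⊔ (ℂ ∙ u₁)) ⊔ (ℂ ∙ u₂)) = ((L₂ ⊔ (ℂ ∙ u₂)) ⊔ (ℂ ∙ u₁)) := by
          apply Submodule.eq_of_le_of_finrank_le hle
          rw [fr ((L₁ ⊔ (ℂ ∙ u₁)) ⊔ (ℂ ∙ u₂))]
          omega
        have hu₂mem : u₂ ∈ LinearMap.BilinForm.orthogonal B ((L₁ ⊔ (ℂ ∙ u₁)) ⊔ (ℂ ∙ u₂)) := by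
          rw [heq]
          exact Submodule.mem_sup_left hu₂M₂
        have : B l u₂ = 0 :=
          orth_apply B hu₂mem (Submodule.mem_sup_left (Submodule.mem_sup_left hlL))
        exact hlne ((hsymm u₂ l).trans this)
      obtain ⟨w₁, hw₁, w₂, hw₂, hBw⟩ := key
      -- facts
      have hw₁u₁ : B u₁ w₁ = 0 :=
        orth_apply B hw₁ (Submodule.mem_sup_left hu₁M₁)
      have hw₁u₂ : B u₂ w₁ = 0 :=
        orth_apply B hw₁ (Submodule.mem_sup_right (Submodule.mem_span_singleton_self u₂))
      have hw₁L₁ : ∀ l' ∈ L₁, B l' w₁ = 0 :=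
        fun l' hl' => orth_apply B hw₁ (Submodule.mem_sup_left (Submodule.mem_sup_left hl'))
      have hw₂u₂ : B u₂ w₂ = 0 :=
        orth_apply B hw₂ (Submodule.mem_sup_left hu₂M₂)
      have hw₂u₁ : B u₁ w₂ = 0 :=
        orth_apply B hw₂ (Submodule.mem_sup_right (Submodule.mem_span_singleton_self u₁))
      have hw₂L₂ : ∀ l' ∈ L₂, B l' w₂ = 0 :=
        fun l' hl' => orth_apply B hw₂ (Submodule.mem_sup_left (Submodule.mem_sup_left hl'))
      have T1 : Tmap B u₁ w₁ ∈ 𝔥 :=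
        h₁ w₁ ((hsymm w₁ u₁).trans hw₁u₁) (fun l' hl' => (hsymm w₁ l').trans (hw₁L₁ l' hl'))
      have T2 : Tmap B u₂ w₂ ∈ 𝔥 :=
        h₂ w₂ ((hsymm w₂ u₂).trans hw₂u₂) (fun l' hl' => (hsymm w₂ l').trans (hw₂L₂ l' hl'))
      have hX : ⁅Tmap B u₂ w₂, Tmap B u₁ w₁⁆ ∈ 𝔥 := 𝔥.lie_mem T2 T1
      have heq : ⁅Tmap B u₂ w₂, Tmap B u₁ w₁⁆ = B w₂ w₁ • Tmap B u₁ u₂ := by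
        rw [lie_Tmap B hsymm u₂ w₂ u₁ w₁,
          show B w₂ u₁ = 0 from (hsymm w₂ u₁).trans hw₂u₁,
          show B u₂ u₁ = 0 from (hsymm u₂ u₁).trans hc,
          show B u₂ w₁ = 0 from hw₁u₂, Tmap_comm B u₂ u₁]
        module
      have hBw' : B w₂ w₁ ≠ 0 := fun h => hBw ((hsymm w₁ w₂).trans h)
      rw [show Tmap B u₁ u₂ = (B w₂ w₁)⁻¹ • ⁅Tmap B u₂ w₂, Tmap B u₁ w₁⁆ from by
        rw [heq, smul_smul, inv_mul_cancel₀ hBw', one_smul]]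
      exact 𝔥.smul_mem _ hX
  · -- CASE B
    -- generator of L₁ with B l₁ l₁ ≠ 0
    obtain ⟨l₁, hl₁L, l', hl'L, hBll'⟩ := hL₁ne
    have hl₁0 : l₁ ≠ 0 := by rintro rfl; simp at hBll'
    have hL₁span : (ℂ ∙ l₁) = L₁ := by
      apply Submodule.eq_of_le_of_finrank_le
        ((Submodule.span_singleton_le_iff_mem l₁ L₁).mpr hl₁L)
      rw [hL₁, finrank_span_singleton hl₁0]
    have hBl₁ : B l₁ l₁ ≠ 0 := by
      obtain ⟨t, ht⟩ := Submodule.mem_span_singleton.mp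
        (show l' ∈ ℂ ∙ l₁ by rw [hL₁span]; exact hl'L)
      intro h0
      apply hBll'
      rw [← ht, map_smul, smul_eq_mul, h0, mul_zero]
    -- generator of L₂
    have hL₂bot : L₂ ≠ ⊥ := by
      intro h; rw [h, finrank_bot] at hL₂; omega
    obtain ⟨l₂, hl₂L, hl₂0⟩ := Submodule.exists_mem_ne_zero_of_ne_bot hL₂bot
    have hL₂span : (ℂ ∙ l₂) = L₂ := by
      apply Submodule.eq_of_le_of_finrank_le
        ((Submodule.span_singleton_le_iff_mem l₂ L₂).mpr hl₂L)
      rw [hL₂, finrank_span_singleton hl₂0]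
    -- catalyst
    have hcat : ∃ cv : V, B u₂ cv = 0 ∧ (∀ l ∈ L₂, B l cv = 0) ∧ B u₁ cv ≠ 0 := by
      by_contra hcon
      push_neg at hcon
      have hmem : u₁ ∈ LinearMap.BilinForm.orthogonal B
          (LinearMap.BilinForm.orthogonal B (L₂ ⊔ (ℂ ∙ u₂))) := by
        apply mem_orth
        intro n hn
        have ha : B u₂ n = 0 := orth_apply B hn hu₂M₂
        have hb : ∀ l ∈ L₂, B l n = 0 := fun l hl => orth_apply B hn (hL₂M₂ hl)
        exact (hsymm n u₁).trans (hcon n ha hb)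
      rw [dd] at hmem
      obtain ⟨a, haL₂, y, hy, hsum⟩ := Submodule.mem_sup.mp hmem
      obtain ⟨t, rfl⟩ := Submodule.mem_span_singleton.mp hy
      apply hc
      have : B u₁ u₂ = B a u₂ + t * B u₂ u₂ := by
        rw [← hsum, map_add, LinearMap.add_apply, map_smul, LinearMap.smul_apply, smul_eq_mul]
      rw [this, show B a u₂ = 0 from (hsymm a u₂).trans (hu₂L a haL₂), hiso₂]
      ring
    -- Step F
    have hF : ∀ cc : V, B u₂ cc = 0 → (∀ l ∈ L₂, B l cc = 0) →
        B u₁ cc • Tmap B u₁ u₂ - B u₁ u₂ • Tmap B u₁ cc ∈ 𝔥 := by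
      intro cc hcc2 hccL
      have frN : Module.finrank ℂ
          (((L₁ ⊔ (ℂ ∙ u₁)) ⊔ (ℂ ∙ u₂)) ⊔ (ℂ ∙ cc) : Submodule ℂ V) ≤ 4 := by
        have ha := frk_sup_le ((L₁ ⊔ (ℂ ∙ u₁)) ⊔ (ℂ ∙ u₂)) (ℂ ∙ cc)
        have hb := frk_sup_le (L₁ ⊔ (ℂ ∙ u₁)) (ℂ ∙ u₂)
        have hc1 := frk_span_singleton_le (V := V) cc
        have hc2 := frk_span_singleton_le (V := V) u₂
        omega
      have frS : 2 ≤ Module.finrank ℂ (LinearMap.BilinForm.orthogonal B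
          (((L₁ ⊔ (ℂ ∙ u₁)) ⊔ (ℂ ∙ u₂)) ⊔ (ℂ ∙ cc))) := by
        rw [fr]; omega
      have hnotle : ¬ (LinearMap.BilinForm.orthogonal B
          (((L₁ ⊔ (ℂ ∙ u₁)) ⊔ (ℂ ∙ u₂)) ⊔ (ℂ ∙ cc)) ≤ L₁ ⊔ (ℂ ∙ u₁)) := by
        intro hle
        have hle' : LinearMap.BilinForm.orthogonal B
            (((L₁ ⊔ (ℂ ∙ u₁)) ⊔ (ℂ ∙ u₂)) ⊔ (ℂ ∙ cc)) ≤ (ℂ ∙ u₁) := by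
          intro x hx
          obtain ⟨a, haL₁, y, hy, hsum⟩ := Submodule.mem_sup.mp (hle hx)
          obtain ⟨s, rfl⟩ := Submodule.mem_span_singleton.mp hy
          obtain ⟨t, rfl⟩ := Submodule.mem_span_singleton.mp
            (show a ∈ ℂ ∙ l₁ by rw [hL₁span]; exact haL₁)
          have hBx : B l₁ x = 0 := orth_apply B hx
            (Submodule.mem_sup_left (Submodule.mem_sup_left (Submodule.mem_sup_left hl₁L)))
          rw [← hsum] at hBx ⊢
          simp only [map_add, map_smul, smul_eq_mul] at hBx
          rw [show B l₁ u₁ = 0 from (hsymm l₁ u₁).trans (hu₁L l₁ hl₁L)] at hBx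
          have ht : t = 0 := by
            have hmul : t * B l₁ l₁ = 0 := by linear_combination hBx
            exact (mul_eq_zero.mp hmul).resolve_right hBl₁
          rw [ht, zero_smul, zero_add]
          exact Submodule.smul_mem _ s (Submodule.mem_span_singleton_self u₁)
        have hfrle := Submodule.finrank_mono hle'
        have := frk_span_singleton_le (V := V) u₁
        omega
      obtain ⟨b, hbS, hbM₁⟩ := SetLike.not_le_iff_exists.mp hnotle
      have hbu₁ : B u₁ b = 0 := orth_apply B hbS
        (Submodule.mem_sup_left (Submodule.mem_sup_left hu₁M₁))
      have hbu₂ : B u₂ b = 0 := orth_apply B hbS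
        (Submodule.mem_sup_left (Submodule.mem_sup_right (Submodule.mem_span_singleton_self u₂)))
      have hbcc : B cc b = 0 := orth_apply B hbS
        (Submodule.mem_sup_right (Submodule.mem_span_singleton_self cc))
      have hbL₁ : ∀ l ∈ L₁, B l b = 0 := fun l hl => orth_apply B hbS
        (Submodule.mem_sup_left (Submodule.mem_sup_left (Submodule.mem_sup_left hl)))
      have hnb : ¬ ∀ av ∈ LinearMap.BilinForm.orthogonal B (L₁ ⊔ (ℂ ∙ u₁)), B av b = 0 := by
        intro hall
        apply hbM₁
        have hb2 : b ∈ LinearMap.BilinForm.orthogonal B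
            (LinearMap.BilinForm.orthogonal B (L₁ ⊔ (ℂ ∙ u₁))) :=
          mem_orth B fun n hn => hall n hn
        rwa [dd] at hb2
      push_neg at hnb
      obtain ⟨av, havW, hab⟩ := hnb
      have havu₁ : B u₁ av = 0 := orth_apply B havW hu₁M₁
      have havL₁ : ∀ l ∈ L₁, B l av = 0 := fun l hl => orth_apply B havW (hL₁M₁ hl)
      have Ta : Tmap B u₁ av ∈ 𝔥 :=
        h₁ av ((hsymm av u₁).trans havu₁) (fun l hl => (hsymm av l).trans (havL₁ l hl))
      have Tb : Tmap B u₁ b ∈ 𝔥 :=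
        h₁ b ((hsymm b u₁).trans hbu₁) (fun l hl => (hsymm b l).trans (hbL₁ l hl))
      have Tc : Tmap B u₂ cc ∈ 𝔥 :=
        h₂ cc ((hsymm cc u₂).trans hcc2) (fun l hl => (hsymm cc l).trans (hccL l hl))
      have hbr : ⁅Tmap B u₁ av, ⁅Tmap B u₁ b, Tmap B u₂ cc⁆⁆
          = B av b • (B u₁ cc • Tmap B u₁ u₂ - B u₁ u₂ • Tmap B u₁ cc)
            + (B u₁ u₂ * B av cc - B u₁ cc * B av u₂) • Tmap B u₁ b := by
        rw [lie_Tmap B hsymm u₁ b u₂ cc,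
          show B b u₂ = 0 from (hsymm b u₂).trans hbu₂,
          show B b cc = 0 from (hsymm b cc).trans hbcc]
        simp only [lie_add, lie_sub, lie_smul]
        rw [lie_Tmap B hsymm u₁ av b cc, lie_Tmap B hsymm u₁ av b u₂,
          show B u₁ b = 0 from hbu₁]
        module
      have hZ : ⁅Tmap B u₁ av, ⁅Tmap B u₁ b, Tmap B u₂ cc⁆⁆ ∈ 𝔥 :=
        𝔥.lie_mem Ta (𝔥.lie_mem Tb Tc)
      rw [hbr] at hZ
      have hgoal : B u₁ cc • Tmap B u₁ u₂ - B u₁ u₂ • Tmap B u₁ cc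
          = (B av b)⁻¹ • ((B av b • (B u₁ cc • Tmap B u₁ u₂ - B u₁ u₂ • Tmap B u₁ cc)
            + (B u₁ u₂ * B av cc - B u₁ cc * B av u₂) • Tmap B u₁ b)
            - (B u₁ u₂ * B av cc - B u₁ cc * B av u₂) • Tmap B u₁ b) := by
        rw [add_sub_cancel_right, smul_smul, inv_mul_cancel₀ hab, one_smul]
      rw [hgoal]
      exact 𝔥.smul_mem _ (𝔥.sub_mem hZ (𝔥.smul_mem _ Tb))
    -- T_{u₁,w} for w ∈ W₂ ∩ u₁^⊥
    have hTu₁w : ∀ w : V, B u₂ w = 0 → (∀ l ∈ L₂, B l w = 0) → B u₁ w = 0 →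
        Tmap B u₁ w ∈ 𝔥 := by
      intro w hw2 hwL hw1
      have hFw := hF w hw2 hwL
      rw [hw1, zero_smul, zero_sub] at hFw
      have hFw' : B u₁ u₂ • Tmap B u₁ w ∈ 𝔥 := by
        have := 𝔥.smul_mem (-1 : ℂ) hFw
        simpa using this
      have heq : Tmap B u₁ w = (B u₁ u₂)⁻¹ • (B u₁ u₂ • Tmap B u₁ w) := by
        rw [smul_smul, inv_mul_cancel₀ hc, one_smul]
      rw [heq]
      exact 𝔥.smul_mem _ hFw'
    -- Step G
    have hG : ∀ w cc : V, B u₂ w = 0 → (∀ l ∈ L₂, B l w = 0) →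
        B u₂ cc = 0 → (∀ l ∈ L₂, B l cc = 0) →
        B w cc • Tmap B u₂ u₁ + B u₁ u₂ • Tmap B w cc ∈ 𝔥 := by
      intro w cc hw2 hwL hcc2 hccL
      have hFc := hF cc hcc2 hccL
      have Tw : Tmap B u₂ w ∈ 𝔥 :=
        h₂ w ((hsymm w u₂).trans hw2) (fun l hl => (hsymm w l).trans (hwL l hl))
      have Tcc : Tmap B u₂ cc ∈ 𝔥 :=
        h₂ cc ((hsymm cc u₂).trans hcc2) (fun l hl => (hsymm cc l).trans (hccL l hl))
      have hbr : ⁅Tmap B u₂ w, B u₁ cc • Tmap B u₁ u₂ - B u₁ u₂ • Tmap B u₁ cc⁆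
          = (B u₁ cc * B u₁ u₂) • Tmap B u₂ w - (B u₁ u₂ * B w u₁) • Tmap B u₂ cc
            + B u₁ u₂ • (B w cc • Tmap B u₂ u₁ + B u₁ u₂ • Tmap B w cc) := by
        simp only [lie_sub, lie_smul]
        rw [lie_Tmap B hsymm u₂ w u₁ u₂, lie_Tmap B hsymm u₂ w u₁ cc,
          show B w u₂ = 0 from (hsymm w u₂).trans hw2, hiso₂,
          show B u₂ cc = 0 from hcc2, show B u₂ u₁ = B u₁ u₂ from hsymm u₂ u₁,
          Tmap_self B u₂, Tmap_comm B u₂ w]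
        module
      have hmem := 𝔥.lie_mem Tw hFc
      rw [hbr] at hmem
      have hc₀G : B u₁ u₂ • (B w cc • Tmap B u₂ u₁ + B u₁ u₂ • Tmap B w cc) ∈ 𝔥 := by
        have hcomb := 𝔥.add_mem (𝔥.sub_mem hmem (𝔥.smul_mem (B u₁ cc * B u₁ u₂) Tw))
          (𝔥.smul_mem (B u₁ u₂ * B w u₁) Tcc)
        convert hcomb using 1
        module
      have heq : B w cc • Tmap B u₂ u₁ + B u₁ u₂ • Tmap B w cc
          = (B u₁ u₂)⁻¹ • (B u₁ u₂ • (B w cc • Tmap B u₂ u₁ + B u₁ u₂ • Tmap B w cc)) := by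
        rw [smul_smul, inv_mul_cancel₀ hc, one_smul]
      rw [heq]
      exact 𝔥.smul_mem _ hc₀G
    -- Step H
    obtain ⟨cv, hcv2, hcvL, hcvu₁⟩ := hcat
    have hFcv := hF cv hcv2 hcvL
    have hH : ∀ x w : V, B u₁ x = 0 → (∀ l ∈ L₁, B l x = 0) →
        B u₂ w = 0 → (∀ l ∈ L₂, B l w = 0) → B u₁ w = 0 →
        B x w • Tmap B u₁ u₂ + B u₁ u₂ • Tmap B x w ∈ 𝔥 := by
      intro x w hx1 hxL hw2 hwL hw1
      have hGwc := hG w cv hw2 hwL hcv2 hcvL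
      have Tx : Tmap B u₁ x ∈ 𝔥 :=
        h₁ x ((hsymm x u₁).trans hx1) (fun l hl => (hsymm x l).trans (hxL l hl))
      have Tw : Tmap B u₁ w ∈ 𝔥 := hTu₁w w hw2 hwL hw1
      have hbr : B u₁ cv • (B x w • Tmap B u₁ u₂ + B u₁ u₂ • Tmap B x w)
          = ⁅Tmap B u₁ x, B w cv • Tmap B u₂ u₁ + B u₁ u₂ • Tmap B w cv⁆
            - (B w cv * B u₁ u₂) • Tmap B u₁ x
            + B x w • (B u₁ cv • Tmap B u₁ u₂ - B u₁ u₂ • Tmap B u₁ cv)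
            + (B u₁ u₂ * B x cv) • Tmap B u₁ w := by
        simp only [lie_add, lie_smul]
        rw [lie_Tmap B hsymm u₁ x u₂ u₁, lie_Tmap B hsymm u₁ x w cv,
          show B x u₁ = 0 from (hsymm x u₁).trans hx1, hiso₁,
          show B u₁ w = 0 from hw1, Tmap_self B u₁, Tmap_comm B u₁ x]
        module
      have hD := 𝔥.lie_mem Tx hGwc
      have hmem : B u₁ cv • (B x w • Tmap B u₁ u₂ + B u₁ u₂ • Tmap B x w) ∈ 𝔥 := by
        rw [hbr]
        exact 𝔥.add_mem (𝔥.add_mem (𝔥.sub_mem hD (𝔥.smul_mem _ Tx)) (𝔥.smul_mem _ hFcv))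
          (𝔥.smul_mem _ Tw)
      have heq : B x w • Tmap B u₁ u₂ + B u₁ u₂ • Tmap B x w
          = (B u₁ cv)⁻¹ • (B u₁ cv • (B x w • Tmap B u₁ u₂ + B u₁ u₂ • Tmap B x w)) := by
        rw [smul_smul, inv_mul_cancel₀ hcvu₁, one_smul]
      rw [heq]
      exact 𝔥.smul_mem _ hmem
    -- final pair
    have frNR : Module.finrank ℂ ((L₁ ⊔ (ℂ ∙ u₁)) ⊔ (L₂ ⊔ (ℂ ∙ u₂)) : Submodule ℂ V) ≤ 4 := by
      have := frk_sup_le (L₁ ⊔ (ℂ ∙ u₁)) (L₂ ⊔ (ℂ ∙ u₂))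
      omega
    have hfin : ∃ x ∈ LinearMap.BilinForm.orthogonal B ((L₁ ⊔ (ℂ ∙ u₁)) ⊔ (L₂ ⊔ (ℂ ∙ u₂))),
        ∃ w ∈ LinearMap.BilinForm.orthogonal B ((L₂ ⊔ (ℂ ∙ u₂)) ⊔ (ℂ ∙ u₁)), B x w ≠ 0 := by
      by_contra hcon
      push_neg at hcon
      have hle : LinearMap.BilinForm.orthogonal B ((L₁ ⊔ (ℂ ∙ u₁)) ⊔ (L₂ ⊔ (ℂ ∙ u₂)))
          ≤ (L₂ ⊔ (ℂ ∙ u₂)) ⊔ (ℂ ∙ u₁) := by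
        rw [← dd ((L₂ ⊔ (ℂ ∙ u₂)) ⊔ (ℂ ∙ u₁))]
        exact fun x hx => mem_orth B fun n hn => (hsymm n x).trans (hcon x hx n hn)
      have hsmall : LinearMap.BilinForm.orthogonal B ((L₁ ⊔ (ℂ ∙ u₁)) ⊔ (L₂ ⊔ (ℂ ∙ u₂)))
          ≤ (ℂ ∙ (l₂ - ((B u₁ u₂)⁻¹ * B u₁ l₂) • u₂)) := by
        intro r hr
        obtain ⟨m, hm, y, hy, hsum⟩ := Submodule.mem_sup.mp (hle hr)
        obtain ⟨s, rfl⟩ := Submodule.mem_span_singleton.mp hy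
        obtain ⟨a, ha, z, hz, hsum2⟩ := Submodule.mem_sup.mp hm
        obtain ⟨t, rfl⟩ := Submodule.mem_span_singleton.mp hz
        obtain ⟨β, rfl⟩ := Submodule.mem_span_singleton.mp
          (show a ∈ ℂ ∙ l₂ by rw [hL₂span]; exact ha)
        have e1 : B u₂ r = 0 := orth_apply B hr (Submodule.mem_sup_right hu₂M₂)
        have e2 : B u₁ r = 0 := orth_apply B hr (Submodule.mem_sup_left hu₁M₁)
        rw [← hsum, ← hsum2] at e1 e2 ⊢
        simp only [map_add, map_smul, smul_eq_mul] at e1 e2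
        rw [show B u₂ l₂ = 0 from hu₂L l₂ hl₂L, hiso₂,
          show B u₂ u₁ = B u₁ u₂ from hsymm u₂ u₁] at e1
        rw [hiso₁] at e2
        have hs : s = 0 := by
          have hmul : s * B u₁ u₂ = 0 := by linear_combination e1
          exact (mul_eq_zero.mp hmul).resolve_right hc
        have ht : t * B u₁ u₂ = -(β * B u₁ l₂) := by linear_combination e2
        have ht2 : t = -(β * ((B u₁ u₂)⁻¹ * B u₁ l₂)) := by
          have h' : t * B u₁ u₂ * (B u₁ u₂)⁻¹ = -(β * B u₁ l₂) * (B u₁ u₂)⁻¹ := by rw [ht]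
          rw [mul_assoc, mul_inv_cancel₀ hc, mul_one] at h'
          rw [h']; ring
        rw [Submodule.mem_span_singleton]
        refine ⟨β, ?_⟩
        rw [hs, ht2]
        module
      have h1 := Submodule.finrank_mono hsmall
      have h2 := frk_span_singleton_le (V := V) (l₂ - ((B u₁ u₂)⁻¹ * B u₁ l₂) • u₂)
      rw [fr] at h1
      omega
    obtain ⟨x, hxR, w, hwQ, hBxw⟩ := hfin
    have hx1 : B u₁ x = 0 := orth_apply B hxR (Submodule.mem_sup_left hu₁M₁)
    have hxL₁ : ∀ l ∈ L₁, B l x = 0 := fun l hl =>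
      orth_apply B hxR (Submodule.mem_sup_left (hL₁M₁ hl))
    have hx2 : B u₂ x = 0 := orth_apply B hxR (Submodule.mem_sup_right hu₂M₂)
    have hxL₂ : ∀ l ∈ L₂, B l x = 0 := fun l hl =>
      orth_apply B hxR (Submodule.mem_sup_right (hL₂M₂ hl))
    have hw2 : B u₂ w = 0 := orth_apply B hwQ (Submodule.mem_sup_left hu₂M₂)
    have hwL₂ : ∀ l ∈ L₂, B l w = 0 := fun l hl =>
      orth_apply B hwQ (Submodule.mem_sup_left (hL₂M₂ hl))
    have hw1 : B u₁ w = 0 := orth_apply B hwQ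
      (Submodule.mem_sup_right (Submodule.mem_span_singleton_self u₁))
    have hGx := hG x w hx2 hxL₂ hw2 hwL₂
    have hHx := hH x w hx1 hxL₁ hw2 hwL₂ hw1
    have hdiff : (B x w • Tmap B u₁ u₂ + B u₁ u₂ • Tmap B x w)
        - (B x w • Tmap B u₂ u₁ + B u₁ u₂ • Tmap B x w) = (2 * B x w) • Tmap B u₁ u₂ := by
      rw [Tmap_comm B u₁ u₂]
      module
    have hmem2 : (2 * B x w) • Tmap B u₁ u₂ ∈ 𝔥 := hdiff ▸ 𝔥.sub_mem hHx hGx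
    have h2Bxw : (2 : ℂ) * B x w ≠ 0 := mul_ne_zero two_ne_zero hBxw
    rw [show Tmap B u₁ u₂ = (2 * B x w)⁻¹ • ((2 * B x w) • Tmap B u₁ u₂) from by
      rw [smul_smul, inv_mul_cancel₀ h2Bxw, one_smul]]
    exact 𝔥.smul_mem _ hmem2


theorem stmt3 (V : Type*) [AddCommGroup V] [Module ℂ V] [FiniteDimensional ℂ V]
    (hd : 6 ≤ Module.finrank ℂ V)
    (B : V →ₗ[ℂ] V →ₗ[ℂ] ℂ) (hsymm : ∀ x y : V, B x y = B y x)
    (hnd : ∀ x : V, (∀ y : V, B x y = 0) → x = 0)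
    (L₁ L₂ : Submodule ℂ V)
    (hL₁ : Module.finrank ℂ L₁ = 1) (hL₂ : Module.finrank ℂ L₂ = 1)
    (u₁ u₂ : V) (hu₁ : u₁ ≠ 0) (hu₂ : u₂ ≠ 0)
    (hiso₁ : B u₁ u₁ = 0) (hiso₂ : B u₂ u₂ = 0)
    (hu₁L : ∀ l ∈ L₁, B u₁ l = 0) (hu₂L : ∀ l ∈ L₂, B u₂ l = 0)
    (hu₁nL : u₁ ∉ L₁) (hu₂nL : u₂ ∉ L₂)
    -- the restriction of `B` to `L₁` is nonzero
    (hL₁ne : ∃ l ∈ L₁, ∃ l' ∈ L₁, B l l' ≠ 0)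
    (𝔥 : LieSubalgebra ℂ (Module.End ℂ V))
    -- `W₁ = (L₁ + ℂu₁)^⊥`: the elements orthogonal to `u₁` and to all of `L₁`
    (h₁ : ∀ w : V, B w u₁ = 0 → (∀ l ∈ L₁, B w l = 0) → Tmap B u₁ w ∈ 𝔥)
    (h₂ : ∀ w : V, B w u₂ = 0 → (∀ l ∈ L₂, B w l = 0) → Tmap B u₂ w ∈ 𝔥) :
    Tmap B u₁ u₂ ∈ 𝔥 := by
  exact stmt3_aux V hd B hsymm hnd L₁ L₂ hL₁ hL₂ u₁ u₂ hu₁ hu₂ hiso₁ hiso₂ hu₁L hu₂L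
    hu₁nL hu₂nL hL₁ne 𝔥 h₁ h₂
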